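/- Let q be a prime power and let C_{q-1} be the irreducible cyclic code of length q+1 over F_q. Then the maximum, over all nonzero codewords c ∈ C_{q-1} and all u ∈ F_q, of 𝒩(u,c)/(q+1) equals 2/(q+1). Consequently, for the systematic authentication code based on C_{q-1}, the maximum success probability of the substitution attack is P_S = 2/(q+1), so this authentication code is optimal (P_S = 1 − d/n) when q is odd and almost optimal (P_S = 1 − (d−1)/n) when q is even, where d is the minimum Hamming distance of C_{q-1} and n = q+1. -/

import Mathlib

open Polynomial
set_option linter.unusedSectionVars false

/-- The codeword `c_N(a) = (Tr(a γ^(N k)))_{k=0}^{n-1}`, a vector of length `n` over `F`. -/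
noncomputable def cwordN {F E : Type} [Field F] [Field E] [Algebra F E]
    (γ : Eˣ) (N n : ℕ) (a : E) : Fin n → F :=
  fun k => Algebra.trace F E (a * (γ : E) ^ (N * (k : ℕ)))

/-- `𝒩(t, v)`: the number of occurrences of the symbol `t` in the vector `v`. -/
def Ncount {F : Type} [DecidableEq F] {n : ℕ} (t : F) (v : Fin n → F) : ℕ :=
  (Finset.univ.filter fun k => v k = t).card

/-- Hamming weight of a vector. -/
def hwt {F : Type} [Field F] [DecidableEq F] {n : ℕ} (v : Fin n → F) : ℕ :=
  (Finset.univ.filter fun k => v k ≠ 0).card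

section Aux

variable {q : ℕ} {F E : Type} [Field F] [Fintype F] [DecidableEq F]
    [Field E] [Fintype E] [Algebra F E]

lemma aux_ordγ (hE : Fintype.card E = q ^ 2) (γ : Eˣ) (hγ : ∀ x : Eˣ, x ∈ Subgroup.zpowers γ) :
    orderOf γ = q ^ 2 - 1 := by
  classical
  rw [orderOf_eq_card_of_forall_mem_zpowers hγ, Nat.card_eq_fintype_card, Fintype.card_units, hE]

lemma aux_q2 (hF : Fintype.card F = q) : 1 < q := hF ▸ Fintype.one_lt_card

lemma aux_sq (hq : 1 < q) : (q - 1) * (q + 1) = q ^ 2 - 1 := by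
  obtain ⟨m, rfl⟩ : ∃ m, q = m + 2 := ⟨q - 2, by omega⟩
  have h : (m + 2) ^ 2 = (m + 1) * (m + 3) + 1 := by ring
  have h2 : m + 2 - 1 = m + 1 := rfl
  have h3 : m + 2 + 1 = m + 3 := rfl
  rw [h2, h3]
  omega

lemma aux_ordδ (hF : Fintype.card F = q) (hE : Fintype.card E = q ^ 2)
    (γ : Eˣ) (hγ : ∀ x : Eˣ, x ∈ Subgroup.zpowers γ) :
    orderOf (γ ^ (q - 1)) = q + 1 := by
  have hq := aux_q2 hF
  rw [orderOf_pow, aux_ordγ hE γ hγ, Nat.gcd_comm,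
    Nat.gcd_eq_left ⟨q + 1, (aux_sq hq).symm⟩, ← aux_sq hq,
    Nat.mul_div_cancel_left _ (by omega : 0 < q - 1)]

end Aux

section Aux2
variable {q : ℕ} {F E : Type} [Field F] [Fintype F] [DecidableEq F]
    [Field E] [Fintype E] [Algebra F E]

lemma trace_formula (hF : Fintype.card F = q) (hE : Fintype.card E = q ^ 2)
    (γ : Eˣ) (hγ : ∀ x : Eˣ, x ∈ Subgroup.zpowers γ) (x : E) :
    algebraMap F E (Algebra.trace F E x) = x + x ^ q := by
  classical
  have hq : 1 < q := hF ▸ Fintype.one_lt_card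
  obtain ⟨p, hp⟩ := CharP.exists F
  haveI : Fact p.Prime := ⟨CharP.char_is_prime F p⟩
  obtain ⟨n, hpn, hn⟩ := FiniteField.card F p
  haveI : CharP E p := charP_of_injective_algebraMap (algebraMap F E).injective p
  rw [hF] at hn
  have hcomm : ∀ r : F, (iterateFrobenius E p n) (algebraMap F E r) = algebraMap F E r := by
    intro r
    rw [iterateFrobenius_def, ← map_pow, ← hn, ← hF, FiniteField.pow_card]
  let f : E →ₐ[F] E := { toRingHom := iterateFrobenius E p (n : ℕ), commutes' := hcomm }
  have hfx : ∀ y : E, f y = y ^ q := by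
    intro y; show iterateFrobenius E p (n : ℕ) y = _
    rw [iterateFrobenius_def, hn]
  have hbij : Function.Bijective f :=
    (Finite.injective_iff_bijective).mp (f.toRingHom.injective)
  let φ : E ≃ₐ[F] E := AlgEquiv.ofBijective f hbij
  have hφx : ∀ y : E, φ y = y ^ q := hfx
  have hord : orderOf γ = q ^ 2 - 1 := aux_ordγ hE γ hγ
  have hφne : φ ≠ 1 := by
    intro h
    have h1 : (γ : E) ^ q = γ := by
      have := congrArg (fun ψ : E ≃ₐ[F] E => ψ (γ : E)) h
      simpa [hφx] using this
    have h2 : γ ^ q = γ := Units.ext (by push_cast; exact h1)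
    have h3 : γ ^ (q - 1) = 1 := by
      have : γ ^ (q - 1) * γ = γ := by
        rw [← pow_succ, Nat.sub_add_cancel hq.le, h2]
      exact mul_right_cancel (by rw [this, one_mul])
    have h4 : orderOf γ ∣ q - 1 := orderOf_dvd_of_pow_eq_one h3
    have h5 : q ^ 2 - 1 ≤ q - 1 := hord ▸ Nat.le_of_dvd (by omega) h4
    have h7 : q ≤ q ^ 2 - 1 := Nat.le_sub_one_of_lt (by nlinarith)
    omega
  have hcard : Fintype.card (E ≃ₐ[F] E) = 2 := by
    rw [← Nat.card_eq_fintype_card, IsGalois.card_aut_eq_finrank]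
    have h := Module.card_eq_pow_finrank (K := F) (V := E)
    rw [hF, hE] at h
    exact (Nat.pow_right_injective hq h.symm)
  have huniv : (Finset.univ : Finset (E ≃ₐ[F] E)) = {1, φ} := by
    symm
    apply Finset.eq_univ_of_card
    rw [Finset.card_insert_of_notMem (by simpa using hφne.symm), Finset.card_singleton, hcard]
  rw [trace_eq_sum_automorphisms, huniv, Finset.sum_pair hφne.symm]
  simp [hφx]

lemma aux_le_two (hF : Fintype.card F = q) (hE : Fintype.card E = q ^ 2)
    (γ : Eˣ) (hγ : ∀ x : Eˣ, x ∈ Subgroup.zpowers γ) (a : E) (ha : a ≠ 0) (t : F) :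
    Ncount t (cwordN (F := F) γ (q - 1) (q + 1) a) ≤ 2 := by
  classical
  have hq := aux_q2 hF
  set δ : Eˣ := γ ^ (q - 1) with hδdef
  have hδ : orderOf δ = q + 1 := aux_ordδ hF hE γ hγ
  have h1 : δ ^ (q + 1) = 1 := by rw [← hδ]; exact pow_orderOf_eq_one δ
  set t' : E := algebraMap F E t with ht'
  set P : E[X] := C a * X ^ 2 + C (-t') * X + C (a ^ q) with hP
  have hPdeg : P.natDegree = 2 := natDegree_quadratic ha
  have hPne : P ≠ 0 := fun h => by simp [h] at hPdeg
  have key : ∀ k : Fin (q + 1), cwordN (F := F) γ (q - 1) (q + 1) a k = t →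
      ((δ ^ (k : ℕ) : Eˣ) : E) ∈ P.roots := by
    intro k hk
    set u : E := ((δ ^ (k : ℕ) : Eˣ) : E) with hu
    have hu1 : u ^ q * u = 1 := by
      have h2 : (δ ^ (k : ℕ)) ^ q * δ ^ (k : ℕ) = 1 := by
        rw [← pow_succ, ← pow_mul, mul_comm (k : ℕ) (q + 1), pow_mul, h1, one_pow]
      have := congrArg (Units.val) h2
      push_cast at this
      exact this
    have hcoe : (γ : E) ^ ((q - 1) * (k : ℕ)) = u := by
      rw [hu, hδdef]; push_cast; rw [pow_mul]
    have hcond : a * u + a ^ q * u ^ q = t' := by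
      have h3 := congrArg (algebraMap F E) hk
      unfold cwordN at h3
      rw [hcoe, trace_formula hF hE γ hγ] at h3
      rw [ht', ← h3]; ring
    rw [mem_roots']
    refine ⟨hPne, ?_⟩
    show P.eval u = 0
    rw [hP]
    simp only [eval_add, eval_mul, eval_C, eval_pow, eval_X]
    linear_combination u * hcond - a ^ q * hu1
  calc Ncount t (cwordN (F := F) γ (q - 1) (q + 1) a)
      = (Finset.univ.filter fun k => cwordN (F := F) γ (q - 1) (q + 1) a k = t).card := rfl
    _ ≤ P.roots.toFinset.card := by
        refine Finset.card_le_card_of_injOn (fun k => ((δ ^ (k : ℕ) : Eˣ) : E)) ?_ ?_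
        · intro k hk
          rw [Finset.mem_coe, Multiset.mem_toFinset]
          exact key k (by simpa [Ncount] using (Finset.mem_filter.mp hk).2)
        · intro k₁ _ k₂ _ hkk
          have h4 : δ ^ (k₁ : ℕ) = δ ^ (k₂ : ℕ) := Units.ext hkk
          have := pow_injOn_Iio_orderOf (x := δ)
            (by rw [hδ]; exact Set.mem_Iio.mpr k₁.isLt)
            (by rw [hδ]; exact Set.mem_Iio.mpr k₂.isLt) h4
          exact Fin.ext this
    _ ≤ Multiset.card P.roots := Multiset.toFinset_card_le _
    _ ≤ P.natDegree := card_roots' P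
    _ = 2 := hPdeg

end Aux2

section Aux3
variable {q : ℕ} {F E : Type} [Field F] [Fintype F] [DecidableEq F]
    [Field E] [Fintype E] [Algebra F E]

lemma aux_sum {n : ℕ} (v : Fin n → F) : ∑ t : F, Ncount t v = n := by
  classical
  unfold Ncount
  rw [← Finset.card_eq_sum_card_fiberwise (f := v) (t := Finset.univ) (fun x _ => Finset.mem_univ _)]
  simp

lemma aux_exists_two (hF : Fintype.card F = q) (hE : Fintype.card E = q ^ 2)
    (γ : Eˣ) (hγ : ∀ x : Eˣ, x ∈ Subgroup.zpowers γ) (a : E) (ha : a ≠ 0) :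
    ∃ t : F, Ncount t (cwordN (F := F) γ (q - 1) (q + 1) a) = 2 := by
  by_contra hcon
  push_neg at hcon
  have hle : ∀ t : F, Ncount t (cwordN (F := F) γ (q - 1) (q + 1) a) ≤ 1 := by
    intro t
    have := aux_le_two hF hE γ hγ a ha t
    have := hcon t
    omega
  have hsum := aux_sum (cwordN (F := F) γ (q - 1) (q + 1) a)
  have : ∑ t : F, Ncount t (cwordN (F := F) γ (q - 1) (q + 1) a) ≤ ∑ _t : F, 1 :=
    Finset.sum_le_sum fun t _ => hle t
  rw [Finset.sum_const, Finset.card_univ, hF, smul_eq_mul, mul_one] at this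
  omega

lemma aux_hwt {n : ℕ} (v : Fin n → F) : Ncount 0 v + hwt v = n := by
  classical
  unfold Ncount hwt
  simp only [ne_eq]
  rw [Finset.card_filter_add_card_filter_not]
  simp

end Aux3

section Aux4
variable {q : ℕ} {F E : Type} [Field F] [Fintype F] [DecidableEq F]
    [Field E] [Fintype E] [Algebra F E]

lemma aux_odd (hF : Fintype.card F = q) (hE : Fintype.card E = q ^ 2)
    (γ : Eˣ) (hγ : ∀ x : Eˣ, x ∈ Subgroup.zpowers γ) (hodd : Odd q) :
    ∃ a : E, a ≠ 0 ∧ 2 ≤ Ncount 0 (cwordN (F := F) γ (q - 1) (q + 1) a) := by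
  classical
  have hq := aux_q2 hF
  obtain ⟨m, rfl⟩ := hodd
  have hm : 1 ≤ m := by omega
  have hord := aux_ordγ hE γ hγ
  have hsq : (2*m+1) ^ 2 - 1 = 4*(m*m) + 4*m := Nat.sub_eq_of_eq_add (by ring)
  have hg2 : (γ ^ (2*(m*m) + 2*m)) ^ 2 = 1 := by
    rw [← pow_mul, (by ring : (2*(m*m)+2*m)*2 = 4*(m*m)+4*m), ← hsq, ← hord, pow_orderOf_eq_one]
  have hgne : γ ^ (2*(m*m) + 2*m) ≠ 1 := by
    intro h
    have h1 := Nat.le_of_dvd (by positivity) (orderOf_dvd_of_pow_eq_one h)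
    rw [hord, hsq] at h1
    nlinarith
  have hneg : ((γ : E)) ^ (2*(m*m) + 2*m) = -1 := by
    set x : E := ((γ : E)) ^ (2*(m*m) + 2*m) with hx
    have h2 : x ^ 2 = 1 := by
      have := congrArg Units.val hg2
      push_cast at this
      exact this
    have h3 : x ≠ 1 := by
      intro h
      exact hgne (Units.ext (by push_cast; exact h))
    rcases mul_eq_zero.mp (show (x - 1) * (x + 1) = (0:E) by linear_combination h2) with h | h
    · exact absurd (sub_eq_zero.mp h) h3
    · exact eq_neg_of_add_eq_zero_left h
  set a : E := (γ : E) ^ (m + 1) with hadef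
  have ha : a ≠ 0 := pow_ne_zero _ (Units.ne_zero γ)
  have haq : a ^ (2*m) = -1 := by
    rw [hadef, ← pow_mul, (by ring : (m+1)*(2*m) = 2*(m*m)+2*m), hneg]
  have haQ : a ^ (2*m+1) = -a := by
    rw [pow_succ, haq, neg_one_mul]
  -- first entry
  have e0 : cwordN (F := F) γ (2*m+1 - 1) (2*m+1 + 1) a 0 = 0 := by
    apply (algebraMap F E).injective
    unfold cwordN
    rw [trace_formula hF hE γ hγ, map_zero]
    simp only [Fin.val_zero, Nat.mul_zero, pow_zero, mul_one]
    rw [haQ]; ring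
  -- second entry
  have hlt : m + 1 < 2*m+1+1 := by omega
  have e1 : cwordN (F := F) γ (2*m+1 - 1) (2*m+1 + 1) a ⟨m+1, hlt⟩ = 0 := by
    apply (algebraMap F E).injective
    unfold cwordN
    rw [trace_formula hF hE γ hγ, map_zero]
    have hexp : (2*m+1-1) * ((⟨m+1, hlt⟩ : Fin (2*m+1+1)) : ℕ) = 2*(m*m)+2*m := by
      show (2*m+1-1) * (m+1) = 2*(m*m)+2*m
      have : 2*m+1-1 = 2*m := rfl
      rw [this]; ring
    rw [hexp, hneg]
    have : a * (-1) = -a := by ring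
    rw [this]
    have h5 : (-a) ^ (2*m+1) = -(-a) := by
      have := Odd.neg_pow (⟨m, by ring⟩ : Odd (2*m+1)) a
      rw [this, haQ]
    rw [h5]; ring
  refine ⟨a, ha, ?_⟩
  have hsub : ({(0 : Fin (2*m+1+1)), ⟨m+1, hlt⟩} : Finset (Fin (2*m+1+1))) ⊆
      Finset.univ.filter fun k => cwordN (F := F) γ (2*m+1 - 1) (2*m+1 + 1) a k = 0 := by
    intro k hk
    rcases Finset.mem_insert.mp hk with h | h
    · subst h; exact Finset.mem_filter.mpr ⟨Finset.mem_univ _, e0⟩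
    · rw [Finset.mem_singleton.mp h]; exact Finset.mem_filter.mpr ⟨Finset.mem_univ _, e1⟩
  have hne : (0 : Fin (2*m+1+1)) ≠ ⟨m+1, hlt⟩ := by
    simp [Fin.ext_iff]
  have hcard2 : ({(0 : Fin (2*m+1+1)), ⟨m+1, hlt⟩} : Finset (Fin (2*m+1+1))).card = 2 := by
    rw [Finset.card_insert_of_notMem (by simpa using hne), Finset.card_singleton]
  calc 2 = ({(0 : Fin (2*m+1+1)), ⟨m+1, hlt⟩} : Finset (Fin (2*m+1+1))).card := hcard2.symm
    _ ≤ _ := Finset.card_le_card hsub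

end Aux4

section Aux5
variable {q : ℕ} {F E : Type} [Field F] [Fintype F] [DecidableEq F]
    [Field E] [Fintype E] [Algebra F E]

lemma aux_even (hF : Fintype.card F = q) (hE : Fintype.card E = q ^ 2)
    (γ : Eˣ) (hγ : ∀ x : Eˣ, x ∈ Subgroup.zpowers γ) (heven : Even q)
    (a : E) (ha : a ≠ 0) :
    Ncount 0 (cwordN (F := F) γ (q - 1) (q + 1) a) = 1 := by
  classical
  have hq := aux_q2 hF
  -- characteristic 2
  obtain ⟨p, hp⟩ := CharP.exists F
  haveI : Fact p.Prime := ⟨CharP.char_is_prime F p⟩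
  obtain ⟨n, hpn, hn⟩ := FiniteField.card F p
  rw [hF] at hn
  have hp2 : p = 2 := by
    have h2 : (2 : ℕ) ∣ p ^ (n : ℕ) := hn ▸ heven.two_dvd
    have := (Nat.prime_dvd_prime_iff_eq Nat.prime_two hpn).mp
      (Nat.Prime.dvd_of_dvd_pow Nat.prime_two h2)
    omega
  haveI : CharP E p := charP_of_injective_algebraMap (algebraMap F E).injective p
  haveI : CharP E 2 := hp2 ▸ inferInstance
  have htwo : (2 : E) = 0 := by
    have := CharP.cast_eq_zero E 2
    exact_mod_cast this
  have sqinj : ∀ x y : E, x ^ 2 = y ^ 2 → x = y := by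
    intro x y h
    have h0 : (x - y) ^ 2 = 0 := by linear_combination h + (y ^ 2 - x * y) * htwo
    have := pow_eq_zero_iff (n := 2) (by omega) |>.mp h0
    exact sub_eq_zero.mp this
  set δ : Eˣ := γ ^ (q - 1) with hδdef
  have hδ : orderOf δ = q + 1 := aux_ordδ hF hE γ hγ
  have h1 : δ ^ (q + 1) = 1 := by rw [← hδ]; exact pow_orderOf_eq_one δ
  -- express the unit of a as a power of γ
  obtain ⟨z, hz⟩ := Subgroup.mem_zpowers_iff.mp (hγ (Units.mk0 a ha))
  -- reduce δ ^ z to a natural power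
  have hq1 : (0 : ℤ) < ((q : ℤ) + 1) := by positivity
  set m' : ℕ := (z % ((q : ℤ) + 1)).toNat with hm'
  have hm'lt : m' < q + 1 := by
    have := Int.emod_lt_of_pos z hq1
    have := Int.emod_nonneg z (by omega : ((q : ℤ) + 1) ≠ 0)
    omega
  have hδz : δ ^ m' = δ ^ z := by
    have h2 : ((m' : ℤ)) = z % ((q : ℤ) + 1) := by
      rw [hm']
      exact Int.toNat_of_nonneg (Int.emod_nonneg z (by omega))
    calc δ ^ m' = δ ^ ((m' : ℤ)) := (zpow_natCast δ m').symm
      _ = δ ^ (z % ((q : ℤ) + 1)) := by rw [h2]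
      _ = δ ^ (z % ((orderOf δ : ℤ))) := by rw [hδ]; norm_cast
      _ = δ ^ z := zpow_mod_orderOf δ z
  -- find k with 2 * k ≡ m' (mod q+1)
  have hex : ∃ k : ℕ, k < q + 1 ∧ (2 * k = m' ∨ 2 * k = m' + (q + 1)) := by
    rcases Nat.even_or_odd m' with ⟨c, hc⟩ | ⟨c, hc⟩
    · exact ⟨c, by omega, Or.inl (by omega)⟩
    · obtain ⟨e, he⟩ := heven
      exact ⟨c + (q + 1 + 1) / 2, by omega, Or.inr (by omega)⟩
  obtain ⟨k, hklt, hk2⟩ := hex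
  have hδ2k : δ ^ (2 * k) = δ ^ m' := by
    rcases hk2 with h | h
    · rw [h]
    · rw [h, pow_add, h1, mul_one]
  -- the distinguished unit
  set U : Eˣ := δ ^ k with hU
  set u : E := (U : E) with hu
  have hUsq : U ^ 2 = (Units.mk0 a ha) ^ (q - 1) := by
    rw [hU, ← pow_mul, mul_comm k 2, hδ2k, hδz, ← hz, hδdef]
    rw [← zpow_natCast (γ ^ z) (q - 1), ← zpow_natCast γ (q - 1)]
    rw [← zpow_mul, ← zpow_mul, mul_comm]
  have husq : u ^ 2 = a ^ (q - 1) := by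
    have := congrArg Units.val hUsq
    push_cast at this
    exact this
  have hau : a * u ^ 2 = a ^ q := by
    rw [husq, ← pow_succ', Nat.sub_add_cancel hq.le]
  have hu1 : u ^ q * u = 1 := by
    have h2 : U ^ q * U = 1 := by
      rw [← pow_succ, hU, ← pow_mul, mul_comm k (q + 1), pow_mul, h1, one_pow]
    have := congrArg Units.val h2
    push_cast at this
    exact this
  -- a helper for all indices
  have hcoe : ∀ j : ℕ, (γ : E) ^ ((q - 1) * j) = ((δ ^ j : Eˣ) : E) := by
    intro j
    rw [hδdef]; push_cast; rw [pow_mul]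
  have hentry : ∀ j : Fin (q + 1),
      cwordN (F := F) γ (q - 1) (q + 1) a j = 0 ↔
        a * ((δ ^ (j : ℕ) : Eˣ) : E) + a ^ q * ((δ ^ (j : ℕ) : Eˣ) : E) ^ q = 0 := by
    intro j
    constructor
    · intro hj
      have h3 := congrArg (algebraMap F E) hj
      unfold cwordN at h3
      rw [hcoe, trace_formula hF hE γ hγ, map_zero] at h3
      rw [← h3]; ring
    · intro hj
      apply (algebraMap F E).injective
      unfold cwordN
      rw [hcoe, trace_formula hF hE γ hγ, map_zero, ← hj]; ring
  -- our index satisfies the condition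
  have hkmem : cwordN (F := F) γ (q - 1) (q + 1) a ⟨k, hklt⟩ = 0 := by
    rw [hentry ⟨k, hklt⟩]
    show a * u + a ^ q * u ^ q = 0
    linear_combination (- (u ^ q)) * hau + a * u * hu1 + a * u * htwo
  -- uniqueness
  have huniq : ∀ j : Fin (q + 1), cwordN (F := F) γ (q - 1) (q + 1) a j = 0 →
      j = ⟨k, hklt⟩ := by
    intro j hj
    rw [hentry j] at hj
    set u' : E := ((δ ^ (j : ℕ) : Eˣ) : E) with hu'
    have hu1' : u' ^ q * u' = 1 := by
      have h2 : (δ ^ (j : ℕ)) ^ q * δ ^ (j : ℕ) = 1 := by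
        rw [← pow_succ, ← pow_mul, mul_comm ((j : ℕ)) (q + 1), pow_mul, h1, one_pow]
      have := congrArg Units.val h2
      push_cast at this
      exact this
    have hsq2 : a * u' ^ 2 = a * u ^ 2 := by
      linear_combination u' * hj - a ^ q * hu1' - hau - a ^ q * htwo
    have : u' = u := sqinj _ _ (mul_left_cancel₀ ha hsq2)
    have hUeq : δ ^ (j : ℕ) = δ ^ k := Units.ext (hu' ▸ hU ▸ this)
    have := pow_injOn_Iio_orderOf (x := δ)
      (by rw [hδ]; exact Set.mem_Iio.mpr j.isLt)
      (by rw [hδ]; exact Set.mem_Iio.mpr hklt) hUeq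
    exact Fin.ext this
  have : (Finset.univ.filter fun j => cwordN (F := F) γ (q - 1) (q + 1) a j = 0) =
      {(⟨k, hklt⟩ : Fin (q + 1))} := by
    apply Finset.eq_singleton_iff_unique_mem.mpr
    exact ⟨Finset.mem_filter.mpr ⟨Finset.mem_univ _, hkmem⟩,
      fun j hjm => huniq j (Finset.mem_filter.mp hjm).2⟩
  unfold Ncount
  rw [this, Finset.card_singleton]

end Aux5

theorem stmt_19 (q : ℕ) (F E : Type) [Field F] [Fintype F] [DecidableEq F]
    [Field E] [Fintype E] [Algebra F E]
    (hF : Fintype.card F = q) (hE : Fintype.card E = q ^ 2)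
    (γ : Eˣ) (hγ : ∀ x : Eˣ, x ∈ Subgroup.zpowers γ)
    -- the minimum Hamming distance of the (linear) code `C_{q-1}`
    (d : ℕ) (hd : d = sInf {w : ℕ | ∃ a : E, a ≠ 0 ∧ w = hwt (cwordN (F := F) γ (q - 1) (q + 1) a)}) :
    IsGreatest
      {x : ℚ | ∃ a : E, a ≠ 0 ∧ ∃ u : F,
        x = (Ncount u (cwordN γ (q - 1) (q + 1) a) : ℚ) / (q + 1)}
      ((2 : ℚ) / (q + 1)) ∧
    (Odd q → (2 : ℚ) / (q + 1) = 1 - (d : ℚ) / (q + 1)) ∧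
    (Even q → (2 : ℚ) / (q + 1) = 1 - ((d : ℚ) - 1) / (q + 1)) := by
  classical
  have hq := aux_q2 hF
  have hQpos : (0 : ℚ) < (q : ℚ) + 1 := by positivity
  refine ⟨⟨?_, ?_⟩, ?_, ?_⟩
  · -- membership
    obtain ⟨t, ht⟩ := aux_exists_two hF hE γ hγ 1 one_ne_zero
    exact ⟨1, one_ne_zero, t, by rw [ht]; norm_num⟩
  · -- upper bound
    rintro x ⟨a, ha, u, rfl⟩
    have h2 := aux_le_two hF hE γ hγ a ha u
    gcongr
    exact_mod_cast h2
  · -- odd case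
    intro hodd
    have hd' : d = q - 1 := by
      rw [hd]
      apply le_antisymm
      · obtain ⟨a, ha, h2⟩ := aux_odd hF hE γ hγ hodd
        have hle := aux_le_two hF hE γ hγ a ha 0
        have hs := aux_hwt (cwordN (F := F) γ (q - 1) (q + 1) a)
        exact Nat.sInf_le ⟨a, ha, by unfold Ncount at *; omega⟩
      · apply le_csInf
        · obtain ⟨a, ha, _⟩ := aux_odd hF hE γ hγ hodd
          exact ⟨_, a, ha, rfl⟩
        · rintro w ⟨a, ha, rfl⟩
          have hle := aux_le_two hF hE γ hγ a ha 0
          have hs := aux_hwt (cwordN (F := F) γ (q - 1) (q + 1) a)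
          omega
    rw [hd', Nat.cast_sub hq.le]
    push_cast
    field_simp
    ring
  · -- even case
    intro heven
    have hd' : d = q := by
      rw [hd]
      apply le_antisymm
      · have h1 := aux_even hF hE γ hγ heven 1 one_ne_zero
        have hs := aux_hwt (cwordN (F := F) γ (q - 1) (q + 1) (1 : E))
        exact Nat.sInf_le ⟨1, one_ne_zero, by omega⟩
      · apply le_csInf
        · exact ⟨_, 1, one_ne_zero, rfl⟩
        · rintro w ⟨a, ha, rfl⟩
          have h1 := aux_even hF hE γ hγ heven a ha
          have hs := aux_hwt (cwordN (F := F) γ (q - 1) (q + 1) a)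
          omega
    rw [hd']
    field_simp
    ring
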